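/- Let k be an algebraically closed field, n ≥ 1, λ ≥ 0, μ ≥ 0, δ, d integers, and take m = 1. Give the polynomial ring S = k[u₀,…,uₙ,x,y,z] the ℕ×ℕ-valued weighting with weight (1,0) on each uᵢ, (0,1) on x, (λ,1) on y and (μ,1) on z, and let V(δ,d) ⊆ S be the k-subspace of polynomials that are weighted homogeneous of weight (δ,d). Assume d ≥ 3, λ ≤ μ and δ ≥ dμ + 1. Then for every a = (a₁,…,aₙ) ∈ kⁿ, the k-linear map V(δ,d) → k[u₁,…,uₙ,x,y]/(u₁,…,uₙ,x,y)² sending f to the residue class of f(1, u₁+a₁, …, uₙ+aₙ, x, y, 1) is surjective. (This is the chart form of Lemma 3.8(4): when m = 1, the second restriction map r₂(p) of O_Q(δ,d) is surjective at every point p of Γ_z = (x = y = 0).) -/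

import Mathlib

open MvPolynomial

section Aux

variable {R : Type*} [CommRing R] {σ : Type*} {M : Type*} [AddCommMonoid M]

theorem whNeg {w : σ → M} {φ : MvPolynomial σ R} {m : M}
    (h : IsWeightedHomogeneous w φ m) : IsWeightedHomogeneous w (-φ) m := by
  intro d hd
  apply h
  simpa using hd

theorem whPow {w : σ → M} {φ : MvPolynomial σ R} {m : M}
    (h : IsWeightedHomogeneous w φ m) (e : ℕ) :
    IsWeightedHomogeneous w (φ ^ e) (e • m) := by
  induction e with
  | zero => simpa using isWeightedHomogeneous_one R w
  | succ e ih =>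
      rw [pow_succ, succ_nsmul]
      exact ih.mul h

theorem sub_constant_mem {τ : Type*} (t : MvPolynomial τ R) :
    t - C (constantCoeff t) ∈
      Ideal.span (Set.range (X : τ → MvPolynomial τ R)) := by
  rw [← Set.image_univ, mem_ideal_span_X_image]
  intro m hm
  by_contra hc
  push_neg at hc
  have hm0 : m = 0 := by
    ext i
    simpa using hc i (Set.mem_univ i)
  subst hm0
  simp [constantCoeff_eq] at hm

end Aux

set_option synthInstance.maxHeartbeats 400000 in
/-- Lemma 3.8(4), chart form: on the `P(1,1,1)`-bundle `Q` over `Pⁿ` (case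
`m = 1`) with Cox coordinates `u₀,…,uₙ,x,y,z` of bidegrees
`(1,0),…,(1,0),(0,1),(λ,1),(μ,1)`, if `d ≥ 3`, `λ ≤ μ` and `δ ≥ dμ + 1`, then
the second restriction map `r₂(p) : H⁰(Q, O_Q(δ,d)) → O_Q(δ,d) ⊗ (O_Q/m_p²)` is
surjective at every point `p` of `Γ_z = (x = y = 0)`, written in the chart
`u₀ ≠ 0`, `z ≠ 0` with chart coordinates `u₁,…,uₙ,x,y`. -/
theorem second_restriction_map_surjective_on_Gammaz
    {k : Type*} [Field k] [IsAlgClosed k]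
    {n lam μ : ℕ} (hn : 1 ≤ n)
    (δ d : ℕ) (hd : 3 ≤ d) (hlam : lam ≤ μ) (hδ : d * μ + 1 ≤ δ)
    -- the bigrading: `uᵢ ↦ (1,0)`, `x ↦ (0,1)`, `y ↦ (λ,1)`, `z ↦ (μ,1)`
    (w : Fin (n + 1) ⊕ Fin 3 → ℕ × ℕ)
    (hw : w = Sum.elim (fun _ => (1, 0)) ![(0, 1), (lam, 1), (μ, 1)])
    (a : Fin n → k) :
    ∀ t : MvPolynomial (Fin n ⊕ Fin 2) k,
      ∃ f : MvPolynomial (Fin (n + 1) ⊕ Fin 3) k,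
        IsWeightedHomogeneous w f (δ, d) ∧
        Ideal.Quotient.mk
            ((Ideal.span (Set.range (X : Fin n ⊕ Fin 2 → MvPolynomial (Fin n ⊕ Fin 2) k))) ^ 2)
            (aeval
              (Sum.elim
                (fun i : Fin (n + 1) =>
                  Fin.cases 1 (fun j : Fin n => X (Sum.inl j) + C (a j)) i)
                ![X (Sum.inr 0), X (Sum.inr 1), 1]) f) =
          Ideal.Quotient.mk _ t := by
  subst hw
  set w : Fin (n + 1) ⊕ Fin 3 → ℕ × ℕ :=
    Sum.elim (fun _ => (1, 0)) ![(0, 1), (lam, 1), (μ, 1)] with hw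
  set A : MvPolynomial (Fin (n + 1) ⊕ Fin 3) k →ₐ[k] MvPolynomial (Fin n ⊕ Fin 2) k :=
    aeval
      (Sum.elim
        (fun i : Fin (n + 1) =>
          Fin.cases 1 (fun j : Fin n => X (Sum.inl j) + C (a j)) i)
        ![X (Sum.inr 0), X (Sum.inr 1), 1]) with hA
  -- values of A on the variables
  have hA0 : A (X (Sum.inl 0)) = 1 := by simp [hA]
  have hAsucc : ∀ j : Fin n, A (X (Sum.inl j.succ)) = X (Sum.inl j) + C (a j) := by
    intro j; simp [hA]
  have hAx : A (X (Sum.inr 0)) = X (Sum.inr 0) := by simp [hA]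
  have hAy : A (X (Sum.inr 1)) = X (Sum.inr 1) := by simp [hA]
  have hAz : A (X (Sum.inr 2)) = 1 := by simp [hA]
  -- homogeneity of the variables
  have hXu : ∀ i : Fin (n + 1),
      IsWeightedHomogeneous w (X (Sum.inl i) : MvPolynomial (Fin (n + 1) ⊕ Fin 3) k)
        ((1 : ℕ), (0 : ℕ)) := by
    intro i; simpa [hw] using isWeightedHomogeneous_X k w (Sum.inl i)
  have hXx : IsWeightedHomogeneous w (X (Sum.inr 0) : MvPolynomial (Fin (n + 1) ⊕ Fin 3) k)
      ((0 : ℕ), (1 : ℕ)) := by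
    simpa [hw] using isWeightedHomogeneous_X k w (Sum.inr 0)
  have hXy : IsWeightedHomogeneous w (X (Sum.inr 1) : MvPolynomial (Fin (n + 1) ⊕ Fin 3) k)
      (lam, (1 : ℕ)) := by
    simpa [hw] using isWeightedHomogeneous_X k w (Sum.inr 1)
  have hXz : IsWeightedHomogeneous w (X (Sum.inr 2) : MvPolynomial (Fin (n + 1) ⊕ Fin 3) k)
      (μ, (1 : ℕ)) := by
    simpa [hw] using isWeightedHomogeneous_X k w (Sum.inr 2)
  -- numeric facts
  have hPδ : d * μ ≤ δ := le_trans (Nat.le_succ _) hδ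
  have hQP : (d - 1) * μ + μ = d * μ := by
    rw [Nat.sub_one_mul]
    exact Nat.sub_add_cancel (Nat.le_mul_of_pos_left μ (by omega))
  have hQδ : (d - 1) * μ ≤ δ :=
    le_trans (le_trans (Nat.le_add_right _ μ) (le_of_eq hQP)) hPδ
  have hlQδ : lam + (d - 1) * μ ≤ δ := by
    refine le_trans ?_ hPδ
    calc lam + (d - 1) * μ ≤ μ + (d - 1) * μ := by omega
      _ = d * μ := by omega
  -- the basic homogeneous sections mapping to 1, x, y, uⱼ
  have hone : ∃ f : MvPolynomial (Fin (n + 1) ⊕ Fin 3) k,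
      IsWeightedHomogeneous w f (δ, d) ∧ A f = 1 := by
    refine ⟨X (Sum.inl 0) ^ (δ - d * μ) * X (Sum.inr 2) ^ d, ?_, ?_⟩
    · have h := (whPow (hXu 0) (δ - d * μ)).mul (whPow hXz d)
      convert h using 1
      · rfl
      simp only [Prod.smul_mk, smul_eq_mul, Prod.mk_add_mk, Prod.mk.injEq,
        mul_one, mul_zero, zero_add]
      constructor <;> first | omega | trivial
    · simp [map_mul, map_pow, hA0, hAz]
  have hvar : ∀ i : Fin n ⊕ Fin 2,
      ∃ f : MvPolynomial (Fin (n + 1) ⊕ Fin 3) k,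
        IsWeightedHomogeneous w f (δ, d) ∧ A f = X i := by
    rintro (j | i)
    · -- variable uⱼ
      refine ⟨X (Sum.inl 0) ^ (δ - d * μ - 1) *
          (X (Sum.inl j.succ) - C (a j) * X (Sum.inl 0)) * X (Sum.inr 2) ^ d, ?_, ?_⟩
      · have hmid : IsWeightedHomogeneous w
            (X (Sum.inl j.succ) - C (a j) * X (Sum.inl 0) :
              MvPolynomial (Fin (n + 1) ⊕ Fin 3) k) ((1 : ℕ), (0 : ℕ)) := by
          rw [sub_eq_add_neg]
          exact (hXu j.succ).add
            (whNeg (by simpa using (isWeightedHomogeneous_C w (a j)).mul (hXu 0)))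
        have h := ((whPow (hXu 0) (δ - d * μ - 1)).mul hmid).mul (whPow hXz d)
        convert h using 1
        · rfl
        simp only [Prod.smul_mk, smul_eq_mul, Prod.mk_add_mk, Prod.mk.injEq,
          mul_one, mul_zero, zero_add, add_zero]
        constructor <;> first | omega | trivial
      · simp [map_mul, map_pow, map_sub, hA0, hAsucc, hAz]
    · -- variables x and y
      fin_cases i
      · refine ⟨X (Sum.inl 0) ^ (δ - (d - 1) * μ) * X (Sum.inr 0) *
            X (Sum.inr 2) ^ (d - 1), ?_, ?_⟩
        · have h := ((whPow (hXu 0) (δ - (d - 1) * μ)).mul hXx).mul (whPow hXz (d - 1))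
          convert h using 1
          · rfl
          simp only [Prod.smul_mk, smul_eq_mul, Prod.mk_add_mk, Prod.mk.injEq,
            mul_one, mul_zero, zero_add, add_zero]
          constructor <;> first | omega | trivial
        · simp [map_mul, map_pow, hA0, hAx, hAz]
      · refine ⟨X (Sum.inl 0) ^ (δ - lam - (d - 1) * μ) * X (Sum.inr 1) *
            X (Sum.inr 2) ^ (d - 1), ?_, ?_⟩
        · have h := ((whPow (hXu 0) (δ - lam - (d - 1) * μ)).mul hXy).mul
            (whPow hXz (d - 1))
          convert h using 1
          · rfl
          simp only [Prod.smul_mk, smul_eq_mul, Prod.mk_add_mk, Prod.mk.injEq,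
            mul_one, mul_zero, zero_add, add_zero]
          constructor <;> first | omega | trivial
        · simp [map_mul, map_pow, hA0, hAy, hAz]
  -- scaling
  have hsmul : ∀ (g : MvPolynomial (Fin n ⊕ Fin 2) k) (c : k),
      (∃ f, IsWeightedHomogeneous w f (δ, d) ∧ A f = g) →
      ∃ f, IsWeightedHomogeneous w f (δ, d) ∧ A f = C c * g := by
    rintro g c ⟨f, hf, he⟩
    exact ⟨C c * f, by simpa using (isWeightedHomogeneous_C w c).mul hf,
      by simp [map_mul, he]⟩
  -- now the induction on t
  intro t
  induction t using MvPolynomial.induction_on with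
  | C c =>
      obtain ⟨f, hf, he⟩ := hsmul 1 c hone
      exact ⟨f, hf, by rw [he]; simp⟩
  | add p q hp hq =>
      obtain ⟨f, hf, hef⟩ := hp
      obtain ⟨g, hg, heg⟩ := hq
      exact ⟨f + g, hf.add hg, by simp [map_add, hef, heg]⟩
  | mul_X p i _ =>
      obtain ⟨f, hf, he⟩ := hsmul (X i) (constantCoeff p) (hvar i)
      refine ⟨f, hf, ?_⟩
      rw [he, Ideal.Quotient.eq]
      have hid : C (constantCoeff p) * X i - p * X i =
          -((p - C (constantCoeff p)) * X i) := by ring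
      rw [hid]
      refine neg_mem ?_
      rw [pow_two]
      exact Ideal.mul_mem_mul (sub_constant_mem p) (Ideal.subset_span ⟨i, rfl⟩)
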